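/- Total demand characterization in the small-interference region (region (a)): Fix W > 0 (the value u(0)), prices 0 ≤ p_1 < p_2 < W, and cross-interference coefficients with 0 ≤ a < (W − p_1)/(W − p_2) and 0 ≤ b < (W − p_2)/(W − p_1). Fix a market disutility level d with p_2 < d < W. (i) If d ≤ (p_2 − b·p_1)/(1 − b), then the unique x ∈ [0,∞)² satisfying [x_i > 0 ⟹ p_i + l_i(x) = d and x_i = 0 ⟹ p_i + l_i(x) ≥ d for i = 1,2] is (x_1, x_2) = (d − p_1, 0), so the total demand is f(d) = d − p_1. (ii) If d > (p_2 − b·p_1)/(1 − b), then the unique such x is x_1 = ((1−a)d + a·p_2 − p_1)/(1 − ab), x_2 = ((1−b)d + b·p_1 − p_2)/(1 − ab), both strictly positive, so the total demand is f(d) = ((2−a−b)d + (a−1)p_2 + (b−1)p_1)/(1 − ab). -/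

import Mathlib

/-- A flow vector `x ∈ [0,∞)²` realizes the fixed market disutility level `d` in the two-AP
market with congestion functions `l₁ x = x₁ + a x₂`, `l₂ x = b x₁ + x₂` and prices
`(p₁, p₂)`: for `i = 1, 2`, `xᵢ > 0` implies `pᵢ + lᵢ x = d` and `xᵢ = 0` implies
`pᵢ + lᵢ x ≥ d`. -/
def WEAtDisutility (a b p1 p2 d : ℝ) (x : ℝ × ℝ) : Prop :=
  0 ≤ x.1 ∧ 0 ≤ x.2 ∧
  (0 < x.1 → p1 + (x.1 + a * x.2) = d) ∧
  (x.1 = 0 → d ≤ p1 + (x.1 + a * x.2)) ∧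
  (0 < x.2 → p2 + (b * x.1 + x.2) = d) ∧
  (x.2 = 0 → d ≤ p2 + (b * x.1 + x.2))

/-- **Total demand characterization in the small-interference region (region (a)).**
With `W = u 0`, prices `0 ≤ p₁ < p₂ < W`, interference coefficients
`0 ≤ a < (W - p₁)/(W - p₂)` and `0 ≤ b < (W - p₂)/(W - p₁)`, and a disutility level
`p₂ < d < W`:
(i) if `d ≤ (p₂ - b p₁)/(1 - b)`, the unique flow realizing `d` is `(d - p₁, 0)`,
so the total demand is `d - p₁`;
(ii) if `d > (p₂ - b p₁)/(1 - b)`, the unique flow realizing `d` is the strictly positive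
pair `(((1-a)d + a p₂ - p₁)/(1 - a b), ((1-b)d + b p₁ - p₂)/(1 - a b))`, so the total
demand is `((2-a-b)d + (a-1)p₂ + (b-1)p₁)/(1 - a b)`. -/
theorem total_demand_region_a
    (W p1 p2 a b d : ℝ)
    (hW : 0 < W) (hp1 : 0 ≤ p1) (hp12 : p1 < p2) (hp2W : p2 < W)
    (ha0 : 0 ≤ a) (ha : a < (W - p1) / (W - p2))
    (hb0 : 0 ≤ b) (hb : b < (W - p2) / (W - p1))
    (hd1 : p2 < d) (hd2 : d < W) :
    (d ≤ (p2 - b * p1) / (1 - b) →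
      (∀ x : ℝ × ℝ, WEAtDisutility a b p1 p2 d x ↔ x = (d - p1, 0)) ∧
      (d - p1) + 0 = d - p1) ∧
    ((p2 - b * p1) / (1 - b) < d →
      (∀ x : ℝ × ℝ, WEAtDisutility a b p1 p2 d x ↔
        x = (((1 - a) * d + a * p2 - p1) / (1 - a * b),
             ((1 - b) * d + b * p1 - p2) / (1 - a * b))) ∧
      0 < ((1 - a) * d + a * p2 - p1) / (1 - a * b) ∧
      0 < ((1 - b) * d + b * p1 - p2) / (1 - a * b) ∧
      ((1 - a) * d + a * p2 - p1) / (1 - a * b)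
        + ((1 - b) * d + b * p1 - p2) / (1 - a * b)
        = ((2 - a - b) * d + (a - 1) * p2 + (b - 1) * p1) / (1 - a * b)) := by
  have hW1' : (0:ℝ) < W - p1 := by linarith
  have hW2' : (0:ℝ) < W - p2 := by linarith
  have haW : a * (W - p2) < W - p1 := (lt_div_iff₀ hW2').mp ha
  have hbW : b * (W - p1) < W - p2 := (lt_div_iff₀ hW1').mp hb
  have hb1 : b < 1 := by nlinarith
  have hab1 : a * b < 1 := by
    nlinarith [mul_lt_mul'' haW hbW (mul_nonneg ha0 hW2'.le) (mul_nonneg hb0 hW1'.le),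
      mul_pos hW1' hW2']
  have hab1' : (0:ℝ) < 1 - a * b := by linarith
  have hnum1 : 0 < (1 - a) * d + a * p2 - p1 := by
    nlinarith [mul_pos (show (0:ℝ) < W - p1 - a * (W - p2) by linarith)
        (show (0:ℝ) < d - p2 by linarith),
      mul_nonneg (show (0:ℝ) ≤ W - d by linarith) (show (0:ℝ) ≤ p2 - p1 by linarith), hW2']
  have h1b : (0:ℝ) < 1 - b := by linarith
  constructor
  · intro hdle
    have hdle' : d * (1 - b) ≤ p2 - b * p1 := by
      have := (le_div_iff₀ h1b).mp hdle
      linarith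
    refine ⟨fun x => ⟨fun hx => ?_, fun hx => ?_⟩, by ring⟩
    · obtain ⟨h1, h2, he1, hz1, he2, hz2⟩ := hx
      rcases h2.eq_or_lt with h20 | h2p
      · -- x.2 = 0
        rcases h1.eq_or_lt with h10 | h1p
        · exfalso
          have := hz1 h10.symm
          rw [← h10, ← h20] at this
          simp at this
          linarith
        · have he := he1 h1p
          have hx2 : a * x.2 = 0 := by rw [← h20]; ring
          have : x.1 = d - p1 := by linarith
          exact Prod.ext_iff.mpr ⟨this, h20.symm⟩
      · -- x.2 > 0
        exfalso
        have he2' := he2 h2p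
        rcases h1.eq_or_lt with h10 | h1p
        · have hz1' := hz1 h10.symm
          have hx2 : x.2 = d - p2 := by
            have : b * x.1 = 0 := by rw [← h10]; ring
            linarith
          have hax2 : a * x.2 = a * (d - p2) := by rw [hx2]
          rw [← h10] at hz1'
          simp at hz1'
          linarith
        · have he1' := he1 h1p
          -- solve: x.2 * (1 - a*b) = (1-b)*d + b*p1 - p2 ≤ 0, contradiction
          have key : x.2 * (1 - a * b) = (1 - b) * d + b * p1 - p2 := by
            linear_combination he2' - b * he1'
          nlinarith
    · subst hx
      refine ⟨by simp; linarith, le_refl 0, fun _ => by simp, fun h => by simp at h; linarith,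
        fun h => by simp at h, fun _ => ?_⟩
      simp only
      nlinarith
  · intro hdgt
    have hnum2 : 0 < (1 - b) * d + b * p1 - p2 := by
      have := (div_lt_iff₀ h1b).mp hdgt
      linarith
    have hX1 : 0 < ((1 - a) * d + a * p2 - p1) / (1 - a * b) := div_pos hnum1 hab1'
    have hX2 : 0 < ((1 - b) * d + b * p1 - p2) / (1 - a * b) := div_pos hnum2 hab1'
    refine ⟨fun x => ⟨fun hx => ?_, fun hx => ?_⟩, hX1, hX2, by
      field_simp; ring⟩
    · obtain ⟨h1, h2, he1, hz1, he2, hz2⟩ := hx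
      rcases h2.eq_or_lt with h20 | h2p
      · exfalso
        have hz2' := hz2 h20.symm
        rcases h1.eq_or_lt with h10 | h1p
        · have := hz1 h10.symm
          rw [← h10, ← h20] at this
          simp at this
          linarith
        · have he1' := he1 h1p
          have hx1 : x.1 = d - p1 := by
            have : a * x.2 = 0 := by rw [← h20]; ring
            linarith
          have hbx1 : b * x.1 = b * (d - p1) := by rw [hx1]
          rw [← h20] at hz2'
          simp at hz2'
          linarith
      · have he2' := he2 h2p
        rcases h1.eq_or_lt with h10 | h1p
        · exfalso
          have hz1' := hz1 h10.symm
          have hx2 : x.2 = d - p2 := by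
            have : b * x.1 = 0 := by rw [← h10]; ring
            linarith
          have hax2 : a * x.2 = a * (d - p2) := by rw [hx2]
          rw [← h10] at hz1'
          simp at hz1'
          linarith
        · have he1' := he1 h1p
          refine Prod.ext_iff.mpr ⟨?_, ?_⟩
          · rw [eq_div_iff (ne_of_gt hab1')]
            linear_combination he1' - a * he2'
          · rw [eq_div_iff (ne_of_gt hab1')]
            linear_combination he2' - b * he1'
    · subst hx
      refine ⟨hX1.le, hX2.le, fun _ => ?_, fun h => absurd h hX1.ne', fun _ => ?_,
        fun h => absurd h hX2.ne'⟩
      · simp only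
        field_simp
        ring
      · simp only
        rw [mul_div_assoc', ← add_div, add_div' _ _ _ hab1'.ne', div_eq_iff hab1'.ne']
        ring
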